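/- Let t > 0 and −π/3 < θ < π/3. Then f₁(t,θ) + 3f₂(t,θ) = 4cos²(θ/2)·|t − e^{iθ}|⁴·(t² + (4cosθ − 3)t + 1)/(2cosθ − 1). Moreover, if (θ, t) ≠ (0, 1) then f₁(t,θ) > 0 and f₁(t,θ) + 3f₂(t,θ) > 0. -/

import Mathlib

set_option maxHeartbeats 800000


open Complex

noncomputable def f1 (t θ : ℝ) : ℝ := 1 - 2 * t ^ 3 * Real.cos (3 * θ) + t ^ 6

noncomputable def f2 (t θ : ℝ) : ℝ :=
  Complex.normSq ((t : ℂ) - exp (θ * I)) *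
    (1 - 2 * t + t ^ 2 - 2 * t ^ 3 + t ^ 4 - 2 * t ^ 2 * Real.cos (3 * θ)) /
    (2 * Real.cos θ - 1)

/-- The identity for `f₁ + 3f₂` and the strict positivity of `f₁` and `f₁ + 3f₂`
when `(θ,t) ≠ (0,1)`. -/
theorem f1_add_three_f2 (t θ : ℝ) (ht : 0 < t)
    (hθl : -(Real.pi / 3) < θ) (hθr : θ < Real.pi / 3) :
    f1 t θ + 3 * f2 t θ =
      4 * Real.cos (θ / 2) ^ 2 * Complex.normSq ((t : ℂ) - exp (θ * I)) ^ 2 *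
        (t ^ 2 + (4 * Real.cos θ - 3) * t + 1) / (2 * Real.cos θ - 1) ∧
    (¬(θ = 0 ∧ t = 1) → 0 < f1 t θ ∧ 0 < f1 t θ + 3 * f2 t θ) := by
  have hpi := Real.pi_pos
  have hcos : Real.cos θ > 1/2 := by
    have h1 : Real.cos (Real.pi / 3) < Real.cos |θ| ∨ |θ| = 0 ∨ Real.pi/3 ≤ |θ| := by
      rcases lt_or_ge |θ| (Real.pi/3) with h | h
      · rcases eq_or_lt_of_le (abs_nonneg θ) with h0 | h0
        · exact Or.inr (Or.inl h0.symm)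
        · exact Or.inl (Real.cos_lt_cos_of_nonneg_of_le_pi (abs_nonneg θ)
            (by linarith) h)
      · exact Or.inr (Or.inr h)
    rcases h1 with h1 | h1 | h1
    · rw [Real.cos_pi_div_three, Real.cos_abs] at h1; linarith
    · have : θ = 0 := abs_eq_zero.mp h1
      simp [this]; norm_num
    · rcases abs_le.mp (le_of_lt (abs_lt.mpr ⟨hθl, hθr⟩)) with ⟨h2, h3⟩
      exfalso
      rcases abs_cases θ with ⟨he, _⟩ | ⟨he, _⟩ <;> [linarith [he ▸ h1]; linarith [he ▸ h1]]
  have hd : 0 < 2 * Real.cos θ - 1 := by linarith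
  have hns : Complex.normSq ((t : ℂ) - exp (θ * I)) =
      t^2 - 2*t*Real.cos θ + 1 := by
    have h1 : ((t : ℂ) - exp (θ * I)).re = t - Real.cos θ := by
      simp [Complex.exp_ofReal_mul_I_re]
    have h2 : ((t : ℂ) - exp (θ * I)).im = -Real.sin θ := by
      simp [Complex.exp_ofReal_mul_I_im]
    rw [Complex.normSq_apply, h1, h2]
    nlinarith [Real.sin_sq_add_cos_sq θ]
  have h3c : Real.cos (3 * θ) = 4 * Real.cos θ ^ 3 - 3 * Real.cos θ :=
    Real.cos_three_mul θ
  have hhalf : Real.cos (θ / 2) ^ 2 = 1/2 + Real.cos θ / 2 := by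
    have := Real.cos_sq (θ / 2)
    rwa [show 2 * (θ / 2) = θ by ring] at this
  set c := Real.cos θ with hc
  have hmain : f1 t θ + 3 * f2 t θ =
      4 * Real.cos (θ / 2) ^ 2 * Complex.normSq ((t : ℂ) - exp (θ * I)) ^ 2 *
        (t ^ 2 + (4 * c - 3) * t + 1) / (2 * c - 1) := by
    rw [f1, f2, hns, h3c, hhalf, ← hc]
    field_simp
    ring
  refine ⟨hmain, fun hne => ?_⟩
  have hsin : Real.sin θ ^ 2 + c ^ 2 = 1 := Real.sin_sq_add_cos_sq θ
  -- positivity of f1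
  have hf1 : 0 < f1 t θ := by
    rw [f1, h3c]
    rcases eq_or_ne θ 0 with rfl | hθ
    · have ht1 : t ≠ 1 := fun h => hne ⟨rfl, h⟩
      have : c = 1 := by simp [hc]
      rw [this]
      have h1 : 0 < (t - 1)^2 := sq_pos_of_ne_zero (sub_ne_zero.mpr ht1)
      have h2 : 0 < (t^2 + t + 1)^2 := by positivity
      nlinarith [mul_pos h1 h2]
    · have hc1 : c < 1 := by
        rcases lt_or_eq_of_le (Real.cos_le_one θ) with h | h
        · exact h
        · exfalso
          rcases (Real.cos_eq_one_iff θ).mp h with ⟨n, hn⟩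
          have : (n : ℝ) = 0 := by
            by_contra hn0
            have h1 : (1:ℝ) ≤ |(n:ℝ)| := by
              have : n ≠ 0 := fun h => hn0 (by exact_mod_cast h)
              exact_mod_cast Int.one_le_abs (by simpa using this)
            have : |θ| = |(n:ℝ)| * (2 * Real.pi) := by
              rw [← hn, abs_mul, abs_of_pos (by linarith : (0:ℝ) < 2 * Real.pi)]
            have habs : |θ| < Real.pi / 3 := abs_lt.mpr ⟨hθl, hθr⟩
            nlinarith
          rw [this] at hn; simp at hn; exact hθ hn.symm
      have hlt : 4*c^3 - 3*c < 1 := by nlinarith [sq_nonneg (2*c+1)]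
      nlinarith [sq_nonneg (t^3 - 1), pow_pos ht 3,
        mul_pos (pow_pos ht 3) (by linarith : (0:ℝ) < 1 - (4*c^3-3*c))]
  refine ⟨hf1, ?_⟩
  -- positivity of f1 + 3 f2
  have hs : 0 < Complex.normSq ((t : ℂ) - exp (θ * I)) := by
    rw [hns]
    rcases eq_or_ne θ 0 with rfl | hθ
    · have ht1 : t ≠ 1 := fun h => hne ⟨rfl, h⟩
      have : c = 1 := by simp [hc]
      rw [this]
      nlinarith [sq_pos_of_ne_zero (sub_ne_zero.mpr ht1)]
    · have hsne : Real.sin θ ≠ 0 := fun h =>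
        hθ ((Real.sin_eq_zero_iff_of_lt_of_lt (by linarith) (by linarith)).mp h)
      nlinarith [sq_pos_of_ne_zero hsne, sq_nonneg (t - c)]
  rw [hmain]
  apply div_pos _ hd
  have h1 : 0 < Real.cos (θ / 2) ^ 2 := by rw [hhalf]; linarith
  have h2 : 0 < t ^ 2 + (4 * c - 3) * t + 1 := by nlinarith [sq_nonneg (t-1)]
  positivity
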